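/- Let G be a graph with vertex set {1,…,n} where n ≥ 2, and let ε > 0. Then there exist points x^1, …, x^n ∈ ℝ^n such that for each i one has Σ_{k=1}^n x^i_k = 1 and ‖x^i − e^i‖ < ε (where e^i is the i-th standard basis vector of ℝ^n), and such that for all i ≠ j the Euclidean distance satisfies ‖x^i − x^j‖ < √2 if ij is an edge of G and ‖x^i − x^j‖ > √2 if ij is not an edge of G. -/

import Mathlib

open Filter MeasureTheory SimpleGraph

set_option linter.unusedVariables false

set_option maxHeartbeats 1000000 in
/-- For every graph on `{1,…,n}` (`n ≥ 2`) and every `ε > 0` there are points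
`x^1, …, x^n` of `ℝ^n`, each with coordinate sum `1` and within distance `ε` of the
corresponding standard basis vector, such that distances corresponding to edges are
`< √2` and distances corresponding to non-edges are `> √2`. -/
theorem exists_points_realising_graph (n : ℕ) (hn : 2 ≤ n) (G : SimpleGraph (Fin n))
    (ε : ℝ) (hε : 0 < ε) :
    ∃ x : Fin n → EuclideanSpace ℝ (Fin n),
      (∀ i, (∑ k, x i k) = 1 ∧ dist (x i) (EuclideanSpace.single i (1 : ℝ)) < ε) ∧
      (∀ i j, i ≠ j →
        (G.Adj i j → dist (x i) (x j) < Real.sqrt 2) ∧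
        (¬ G.Adj i j → Real.sqrt 2 < dist (x i) (x j))) := by
  classical
  have hn0 : (0:ℝ) < n := by
    have : (2:ℝ) ≤ n := by exact_mod_cast hn
    linarith
  -- adjacency matrix
  set a : Fin n → Fin n → ℝ := fun i k => if G.Adj i k then 1 else 0 with ha
  have ha0 : ∀ i k, 0 ≤ a i k := by
    intro i k; simp only [ha]; split <;> norm_num
  have ha1 : ∀ i k, a i k ≤ 1 := by
    intro i k; simp only [ha]; split <;> norm_num
  have hadiag : ∀ i, a i i = 0 := by
    intro i; simp [ha]
  have hasymm : ∀ i j, a i j = a j i := by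
    intro i j; simp only [ha, G.adj_comm]
  -- degrees
  set d : Fin n → ℝ := fun i => ∑ k, a i k with hd
  have hd0 : ∀ i, 0 ≤ d i := fun i => Finset.sum_nonneg fun k _ => ha0 i k
  have hdn : ∀ i, d i ≤ n := by
    intro i
    calc d i ≤ ∑ _k : Fin n, (1:ℝ) := Finset.sum_le_sum fun k _ => ha1 i k
    _ = n := by simp
  set c : Fin n → Fin n → ℝ := fun i k => a i k - d i / n with hc
  have hcbd : ∀ i k, |c i k| ≤ 1 := by
    intro i k
    have h1 : 0 ≤ d i / n := div_nonneg (hd0 i) hn0.le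
    have h2 : d i / n ≤ 1 := by
      rw [div_le_one hn0]; exact hdn i
    rw [abs_le]
    constructor <;> simp only [hc] <;> nlinarith [ha0 i k, ha1 i k]
  -- choose t
  set t : ℝ := min (ε / (4*n)) (1/(2*n)) with htdef
  have ht0 : 0 < t := lt_min (by positivity) (by positivity)
  have ht1 : t ≤ ε / (4*n) := min_le_left _ _
  have ht2 : t ≤ 1/(2*n) := min_le_right _ _
  have htn : t * n ≤ 1/2 := by
    have h := ht2
    rw [le_div_iff₀ (by positivity : (0:ℝ) < 2*n)] at h
    nlinarith
  have htq : t ≤ 1/4 := by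
    have : (2:ℝ) ≤ n := by exact_mod_cast hn
    nlinarith
  -- the points
  set x : Fin n → EuclideanSpace ℝ (Fin n) := fun i =>
    WithLp.toLp 2 (fun k => (if i = k then (1:ℝ) else 0) + t * c i k
      + t^2 * ((if i = k then (1:ℝ) else 0) - 1/n)) with hx
  have hxapp : ∀ i k, x i k = (if i = k then (1:ℝ) else 0) + t * c i k
      + t^2 * ((if i = k then (1:ℝ) else 0) - 1/n) := fun i k => rfl
  -- basic sums
  have hdelta : ∀ (i : Fin n) (f : Fin n → ℝ),
      ∑ k, (if i = k then (1:ℝ) else 0) * f k = f i := by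
    intro i f
    have h : ∀ k, (if i = k then (1:ℝ) else 0) * f k = if i = k then f k else 0 := by
      intro k; split <;> simp
    rw [Finset.sum_congr rfl (fun k _ => h k), Finset.sum_ite_eq]
    simp
  have hsum1 : ∀ i : Fin n, ∑ k, (if i = k then (1:ℝ) else 0) = 1 := by
    intro i; simp
  -- squared distance between x i and x j
  have key : ∀ i j : Fin n, i ≠ j →
      ∑ k, (x i k - x j k)^2
        = 2*(1+t^2)^2 - 4*t*(1+t^2)*(a i j) + t^2 * ∑ k, (c i k - c j k)^2 := by
    intro i j hij
    have hptw : ∀ k, x i k - x j k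
        = (1+t^2) * ((if i = k then (1:ℝ) else 0) - (if j = k then (1:ℝ) else 0))
          + t * (c i k - c j k) := by
      intro k; rw [hxapp, hxapp]; ring
    have hDD : ∑ k, ((if i = k then (1:ℝ) else 0) - (if j = k then (1:ℝ) else 0))^2
        = 2 := by
      have : ∀ k, ((if i = k then (1:ℝ) else 0) - (if j = k then (1:ℝ) else 0))^2
          = (if i = k then (1:ℝ) else 0) + (if j = k then (1:ℝ) else 0)
            - 2 * ((if i = k then (1:ℝ) else 0) * (if j = k then (1:ℝ) else 0)) := by
        intro k
        by_cases h1 : i = k <;> by_cases h2 : j = k <;> simp [h1, h2] <;> ring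
      rw [Finset.sum_congr rfl (fun k _ => this k)]
      have hz : ∑ k, (if i = k then (1:ℝ) else 0) * (if j = k then (1:ℝ) else 0) = 0 := by
        apply Finset.sum_eq_zero
        intro k _
        by_cases h1 : i = k
        · have h2 : ¬ (j = k) := fun h => hij (h1.trans h.symm)
          simp [h1, h2]
        · simp [h1]
      rw [Finset.sum_sub_distrib, Finset.sum_add_distrib, hsum1, hsum1,
        ← Finset.mul_sum, hz]
      ring
    have hDE : ∑ k, ((if i = k then (1:ℝ) else 0) - (if j = k then (1:ℝ) else 0))
          * (c i k - c j k) = -(2 * a i j) := by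
      have : ∀ k, ((if i = k then (1:ℝ) else 0) - (if j = k then (1:ℝ) else 0))
          * (c i k - c j k)
          = (if i = k then (1:ℝ) else 0) * (c i k - c j k)
            - (if j = k then (1:ℝ) else 0) * (c i k - c j k) := by
        intro k; ring
      rw [Finset.sum_congr rfl (fun k _ => this k), Finset.sum_sub_distrib,
        hdelta, hdelta]
      simp only [hc]
      rw [hadiag i, hadiag j, hasymm j i]
      ring
    calc ∑ k, (x i k - x j k)^2
        = ∑ k, ((1+t^2)^2 * ((if i = k then (1:ℝ) else 0) - (if j = k then (1:ℝ) else 0))^2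
          + 2*(1+t^2)*t * (((if i = k then (1:ℝ) else 0) - (if j = k then (1:ℝ) else 0))
            * (c i k - c j k))
          + t^2 * (c i k - c j k)^2) := by
          apply Finset.sum_congr rfl
          intro k _
          rw [hptw k]; ring
      _ = (1+t^2)^2 * (∑ k, ((if i = k then (1:ℝ) else 0) - (if j = k then (1:ℝ) else 0))^2)
          + 2*(1+t^2)*t * (∑ k, ((if i = k then (1:ℝ) else 0) - (if j = k then (1:ℝ) else 0))
            * (c i k - c j k))
          + t^2 * ∑ k, (c i k - c j k)^2 := by
          rw [Finset.sum_add_distrib, Finset.sum_add_distrib, ← Finset.mul_sum,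
            ← Finset.mul_sum, ← Finset.mul_sum]
      _ = _ := by rw [hDD, hDE]; ring
  -- bound on Q
  have hQbd : ∀ i j : Fin n, ∑ k, (c i k - c j k)^2 ≤ 4 * n := by
    intro i j
    calc ∑ k, (c i k - c j k)^2 ≤ ∑ _k : Fin n, (4:ℝ) := by
          apply Finset.sum_le_sum
          intro k _
          have h1 := abs_le.mp (hcbd i k)
          have h2 := abs_le.mp (hcbd j k)
          nlinarith [h1.1, h1.2, h2.1, h2.2]
      _ = 4 * n := by simp [mul_comm]
  have hQ0 : ∀ i j : Fin n, 0 ≤ ∑ k, (c i k - c j k)^2 := by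
    intro i j; positivity
  -- distance formula
  have hdist : ∀ (u v : EuclideanSpace ℝ (Fin n)),
      dist u v = Real.sqrt (∑ k, (u k - v k)^2) := by
    intro u v
    rw [EuclideanSpace.dist_eq]
    congr 1
    apply Finset.sum_congr rfl
    intro k _
    rw [Real.dist_eq, sq_abs]
  refine ⟨x, ?_, ?_⟩
  · intro i
    constructor
    · -- sum = 1
      have hcs : ∑ k, c i k = 0 := by
        simp only [hc]
        rw [Finset.sum_sub_distrib, Finset.sum_const, Finset.card_univ,
          Fintype.card_fin, nsmul_eq_mul]
        have hda : ∑ k, a i k = d i := rfl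
        rw [hda]
        field_simp
        ring
      have h3 : ∑ k, ((if i = k then (1:ℝ) else 0) - 1/n) = 1 - n * (1/n) := by
        rw [Finset.sum_sub_distrib, hsum1, Finset.sum_const, Finset.card_univ,
          Fintype.card_fin, nsmul_eq_mul]
      calc ∑ k, x i k
          = (∑ k, (if i = k then (1:ℝ) else 0)) + t * (∑ k, c i k)
            + t^2 * (∑ k, ((if i = k then (1:ℝ) else 0) - 1/n)) := by
            rw [Finset.sum_add_distrib, Finset.sum_add_distrib, ← Finset.mul_sum,
              ← Finset.mul_sum]
        _ = 1 := by
            rw [hsum1, hcs, h3]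
            field_simp
            ring
    · -- close to basis vector
      rw [hdist]
      have hS : ∑ k, (x i k - EuclideanSpace.single i (1:ℝ) k)^2 < ε^2 := by
        have hbd : ∀ k, (x i k - EuclideanSpace.single i (1:ℝ) k)^2 ≤ 4*t^2 := by
          intro k
          have hsingle : EuclideanSpace.single i (1:ℝ) k = if i = k then (1:ℝ) else 0 := by
            rw [EuclideanSpace.single_apply]
            by_cases h : i = k <;> simp [h, eq_comm]
          rw [hxapp, hsingle]
          have heq : (if i = k then (1:ℝ) else 0) + t * c i k
              + t^2 * ((if i = k then (1:ℝ) else 0) - 1/n) - (if i = k then (1:ℝ) else 0)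
              = t * c i k + t^2 * ((if i = k then (1:ℝ) else 0) - 1/n) := by ring
          rw [heq]
          have hw : |(if i = k then (1:ℝ) else 0) - 1/n| ≤ 1 := by
            have h1 : (0:ℝ) < 1/n := by positivity
            have h2 : (1:ℝ)/n ≤ 1 := by
              rw [div_le_one hn0]
              have : (2:ℝ) ≤ n := by exact_mod_cast hn
              linarith
            rw [abs_le]; constructor <;> split <;> nlinarith
          have habs : |t * c i k + t^2 * ((if i = k then (1:ℝ) else 0) - 1/n)| ≤ 2*t := by
            calc |t * c i k + t^2 * ((if i = k then (1:ℝ) else 0) - 1/n)|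
                ≤ |t * c i k| + |t^2 * ((if i = k then (1:ℝ) else 0) - 1/n)| := abs_add_le _ _
              _ = t * |c i k| + t^2 * |(if i = k then (1:ℝ) else 0) - 1/n| := by
                  rw [abs_mul, abs_mul, abs_of_pos ht0, abs_of_nonneg (sq_nonneg t)]
              _ ≤ t * 1 + t^2 * 1 := by
                  apply add_le_add
                  · exact mul_le_mul_of_nonneg_left (hcbd i k) ht0.le
                  · exact mul_le_mul_of_nonneg_left hw (sq_nonneg t)
              _ ≤ 2*t := by nlinarith [htq, ht0]
          calc (t * c i k + t^2 * ((if i = k then (1:ℝ) else 0) - 1/n))^2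
              = |t * c i k + t^2 * ((if i = k then (1:ℝ) else 0) - 1/n)|^2 := (sq_abs _).symm
            _ ≤ (2*t)^2 := by
                apply pow_le_pow_left₀ (abs_nonneg _) habs
            _ = 4*t^2 := by ring
        have h4n : t * (4*n) ≤ ε := by
          have h := ht1
          rw [le_div_iff₀ (by positivity : (0:ℝ) < 4*n)] at h
          linarith
        calc ∑ k, (x i k - EuclideanSpace.single i (1:ℝ) k)^2
            ≤ ∑ _k : Fin n, (4*t^2) := Finset.sum_le_sum fun k _ => hbd k
          _ = 4*t^2*n := by rw [Finset.sum_const, Finset.card_univ, Fintype.card_fin]; ring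
          _ = t * (t * (4*n)) := by ring
          _ ≤ t * ε := by
              apply mul_le_mul_of_nonneg_left h4n ht0.le
          _ < ε^2 := by
              have h2n : (2:ℝ) ≤ n := by exact_mod_cast hn
              have htε : t < ε := by
                apply lt_of_le_of_lt ht1
                rw [div_lt_iff₀ (by positivity : (0:ℝ) < 4*n)]
                nlinarith
              nlinarith [mul_lt_mul_of_pos_right htε hε]
      calc Real.sqrt (∑ k, (x i k - EuclideanSpace.single i (1:ℝ) k)^2)
          < Real.sqrt (ε^2) := Real.sqrt_lt_sqrt (by positivity) hS
        _ = ε := Real.sqrt_sq hε.le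
  · intro i j hij
    have hkey := key i j hij
    set Q := ∑ k, (c i k - c j k)^2 with hQ
    constructor
    · intro hadj
      have haij : a i j = 1 := by simp [ha, hadj]
      rw [haij] at hkey
      rw [hdist]
      have hS : ∑ k, (x i k - x j k)^2 < 2 := by
        rw [hkey]
        have h1 : t^2 * Q ≤ t^2 * (4*n) := by
          apply mul_le_mul_of_nonneg_left (hQbd i j) (by positivity)
        have h2 : t^2 * (4*n) ≤ 2*t := by
          nlinarith [mul_le_mul_of_nonneg_left htn (by linarith : (0:ℝ) ≤ 4*t)]
        have h3 : t^2 * Q ≤ 2*t := le_trans h1 h2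
        nlinarith [h3, ht0, mul_le_mul_of_nonneg_left htq ht0.le,
          pow_nonneg ht0.le 3,
          mul_le_mul_of_nonneg_left htq (pow_nonneg ht0.le 3)]
      exact Real.sqrt_lt_sqrt (by positivity) hS
    · intro hnadj
      have haij : a i j = 0 := by simp [ha, hnadj]
      rw [haij] at hkey
      rw [hdist]
      have hS : 2 < ∑ k, (x i k - x j k)^2 := by
        rw [hkey]
        nlinarith [hQ0 i j, ht0, sq_nonneg t]
      exact Real.sqrt_lt_sqrt (by norm_num) hS
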